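/- The even 4-uniform hypergraph obtained from a Sidorenko graph is Sidorenko: if G is a Sidorenko 2-uniform graph and G̃ is the 4-uniform hypergraph on V(G) × {1,2} with hyperedges {u,v} × {1,2} for each edge {u,v} of G, then t(G̃, H) ≥ t(K₄^{(4)}, H)^{e(G)} for every 4-uniform hypergraph H, where K₄^{(4)} is a single 4-uniform edge on 4 vertices. -/

import Mathlib

open Finset
open scoped Classical

/-- The homomorphism density `t(G, H)`: the probability that a uniformly random map
`V(G) → V(H)` is a graph homomorphism. -/
noncomputable def homDensity {V W : Type} [Fintype V] [Fintype W]
    (G : SimpleGraph V) (H : SimpleGraph W) : ℝ :=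
  ((Finset.univ.filter
      (fun f : V → W => ∀ ⦃u v : V⦄, G.Adj u v → H.Adj (f u) (f v))).card : ℝ) /
    (Fintype.card W : ℝ) ^ (Fintype.card V)

/-- A hypergraph on vertex type `V` is given by its finite set of hyperedges. The
homomorphism density `t(G, H)` is the probability that a uniformly random map
`V(G) → V(H)` sends every hyperedge of `G` to a hyperedge of `H`. -/
noncomputable def hHomDensity {V W : Type} [Fintype V] [Fintype W]
    (G : Finset (Finset V)) (H : Finset (Finset W)) : ℝ :=
  ((Finset.univ.filter
      (fun f : V → W => ∀ e ∈ G, e.image f ∈ H)).card : ℝ) /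
    (Fintype.card W : ℝ) ^ (Fintype.card V)

/-- The even 4-uniform hypergraph obtained from a 2-uniform graph `G`: on vertex set
`V(G) × {1,2}`, with hyperedges `{u,v} × {1,2}` for each edge `{u,v}` of `G`. -/
noncomputable def evenHypergraph {V : Type} [Fintype V] (G : SimpleGraph V) :
    Finset (Finset (V × Fin 2)) :=
  G.edgeFinset.image (fun e =>
    (Finset.univ.filter (· ∈ e)) ×ˢ (Finset.univ : Finset (Fin 2)))

/-- A single 4-uniform edge `K₄⁽⁴⁾`. -/
def K4edge : Finset (Finset (Fin 4)) := {Finset.univ}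

/-- The auxiliary 2-uniform graph on `Fin 2 → W` associated to a 4-uniform
hypergraph `H` on `W`. -/
noncomputable def auxGraph {W : Type} [Fintype W] (H : Finset (Finset W)) :
    SimpleGraph (Fin 2 → W) where
  Adj g h := g ≠ h ∧ ({g 0, g 1, h 0, h 1} : Finset W) ∈ H
  symm := by
    constructor
    rintro g h ⟨hne, hmem⟩
    refine ⟨hne.symm, ?_⟩
    have : ({h 0, h 1, g 0, g 1} : Finset W) = {g 0, g 1, h 0, h 1} := by
      ext x; simp; tauto
    rw [this]; exact hmem
  loopless := by constructor; rintro g ⟨hne, _⟩; exact hne rfl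

lemma auxGraph_adj {W : Type} [Fintype W] {H : Finset (Finset W)}
    (hH : ∀ e ∈ H, e.card = 4) (g h : Fin 2 → W) :
    (auxGraph H).Adj g h ↔ ({g 0, g 1, h 0, h 1} : Finset W) ∈ H := by
  constructor
  · exact fun x => x.2
  · intro hmem
    refine ⟨?_, hmem⟩
    intro hgh
    rw [hgh] at hmem
    have h4 := hH _ hmem
    have heq : ({h 0, h 1, h 0, h 1} : Finset W) = {h 0, h 1} := by ext x; simp
    rw [heq] at h4
    have : ({h 0, h 1} : Finset W).card ≤ 2 :=
      (Finset.card_insert_le _ _).trans (by simp)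
    omega

lemma hyperedge_image {V W : Type} (u v : V) (f : V × Fin 2 → W) :
    (({u, v} : Finset V) ×ˢ (Finset.univ : Finset (Fin 2))).image f
      = {f (u, 0), f (u, 1), f (v, 0), f (v, 1)} := by
  ext w
  simp [Fin.exists_fin_two]
  tauto

lemma cond_iff {V W : Type} [Fintype V] [Fintype W] (G : SimpleGraph V)
    (H : Finset (Finset W)) (hH : ∀ e ∈ H, e.card = 4) (f : V × Fin 2 → W) :
    (∀ e ∈ evenHypergraph G, e.image f ∈ H) ↔
    (∀ ⦃u v : V⦄, G.Adj u v →
      (auxGraph H).Adj (fun i => f (u, i)) (fun i => f (v, i))) := by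
  constructor
  · intro h u v huv
    rw [auxGraph_adj hH]
    have hmem : (Finset.univ.filter (· ∈ s(u, v))) ×ˢ
        (Finset.univ : Finset (Fin 2)) ∈ evenHypergraph G :=
      Finset.mem_image_of_mem _ (by simpa [SimpleGraph.mem_edgeFinset] using huv)
    have := h _ hmem
    have hfil : (Finset.univ.filter (· ∈ s(u, v))) = ({u, v} : Finset V) := by
      ext x; simp [Sym2.mem_iff]
    rw [hfil, hyperedge_image] at this
    exact this
  · intro h e he
    simp only [evenHypergraph, Finset.mem_image] at he
    obtain ⟨s, hs, rfl⟩ := he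
    induction s using Sym2.ind with
    | _ u v =>
      have huv : G.Adj u v := by simpa [SimpleGraph.mem_edgeFinset] using hs
      have := (h huv).2
      have hfil : (Finset.univ.filter (· ∈ s(u, v))) = ({u, v} : Finset V) := by
        ext x; simp [Sym2.mem_iff]
      rw [hfil, hyperedge_image]
      exact this

lemma count1 {V W : Type} [Fintype V] [Fintype W] (G : SimpleGraph V)
    (H : Finset (Finset W)) (hH : ∀ e ∈ H, e.card = 4)
    (ft1 : Fintype (V × Fin 2 → W)) (ft2 : Fintype (V → Fin 2 → W))
    (i1 : DecidablePred (fun f : V × Fin 2 → W => ∀ e ∈ evenHypergraph G, e.image f ∈ H))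
    (i2 : DecidablePred (fun g : V → Fin 2 → W =>
        ∀ ⦃u v : V⦄, G.Adj u v → (auxGraph H).Adj (g u) (g v))) :
    (@Finset.filter _
      (fun f : V × Fin 2 → W => ∀ e ∈ evenHypergraph G, e.image f ∈ H) i1
      (@Finset.univ _ ft1)).card
    = (@Finset.filter _ (fun g : V → Fin 2 → W =>
        ∀ ⦃u v : V⦄, G.Adj u v → (auxGraph H).Adj (g u) (g v)) i2
      (@Finset.univ _ ft2)).card := by
  apply Finset.card_nbij' (fun f => fun v i => f (v, i))
    (fun g => fun p => g p.1 p.2)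
  · intro f hf
    simp only [Finset.mem_coe, Finset.mem_filter, Finset.mem_univ, true_and] at hf ⊢
    exact (cond_iff G H hH f).mp hf
  · intro g hg
    simp only [Finset.mem_coe, Finset.mem_filter, Finset.mem_univ, true_and] at hg ⊢
    rw [cond_iff G H hH]
    intro u v huv
    exact hg huv
  · intro f _; rfl
  · intro g _; rfl

def e24 : Fin 2 × Fin 2 ≃ Fin 4 where
  toFun p := ⟨2 * p.1.val + p.2.val, by omega⟩
  invFun k := (⟨k.val / 2, by omega⟩, ⟨k.val % 2, by omega⟩)
  left_inv := by decide
  right_inv := by decide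

lemma univ4 : (Finset.univ : Finset (Fin 4)) = {0, 1, 2, 3} := by decide

lemma count2 {W : Type} [Fintype W] (H : Finset (Finset W))
    (hH : ∀ e ∈ H, e.card = 4)
    (ft1 : Fintype (Fin 4 → W)) (ft2 : Fintype (Fin 2 → Fin 2 → W))
    (i1 : DecidablePred (fun f : Fin 4 → W => ∀ e ∈ K4edge, e.image f ∈ H))
    (i2 : DecidablePred (fun g : Fin 2 → Fin 2 → W =>
        ∀ ⦃u v : Fin 2⦄, (⊤ : SimpleGraph (Fin 2)).Adj u v →
          (auxGraph H).Adj (g u) (g v))) :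
    (@Finset.filter _
      (fun f : Fin 4 → W => ∀ e ∈ K4edge, e.image f ∈ H) i1 (@Finset.univ _ ft1)).card
    = (@Finset.filter _ (fun g : Fin 2 → Fin 2 → W =>
        ∀ ⦃u v : Fin 2⦄, (⊤ : SimpleGraph (Fin 2)).Adj u v →
          (auxGraph H).Adj (g u) (g v)) i2 (@Finset.univ _ ft2)).card := by
  have hadj := auxGraph_adj (H := H) hH
  have key : ∀ f : Fin 4 → W,
      (∀ e ∈ K4edge, e.image f ∈ H) ↔
      (∀ ⦃u v : Fin 2⦄, (⊤ : SimpleGraph (Fin 2)).Adj u v →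
        (auxGraph H).Adj (fun j => f (e24 (u, j))) (fun j => f (e24 (v, j)))) := by
    intro f
    have himg : (Finset.univ : Finset (Fin 4)).image f = {f 0, f 1, f 2, f 3} := by
      rw [univ4]; simp
    have he0 : e24 (0, 0) = 0 := by decide
    have he1 : e24 (0, 1) = 1 := by decide
    have he2 : e24 (1, 0) = 2 := by decide
    have he3 : e24 (1, 1) = 3 := by decide
    constructor
    · intro h u v huv
      have hmem : ({f 0, f 1, f 2, f 3} : Finset W) ∈ H := by
        rw [← himg]; exact h _ (by simp [K4edge])
      rw [hadj]
      have huv' : u ≠ v := huv.ne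
      have : (u = 0 ∧ v = 1) ∨ (u = 1 ∧ v = 0) := by omega
      rcases this with ⟨rfl, rfl⟩ | ⟨rfl, rfl⟩
      · simpa [he0, he1, he2, he3] using hmem
      · simp only [he0, he1, he2, he3]
        have : ({f 2, f 3, f 0, f 1} : Finset W) = {f 0, f 1, f 2, f 3} := by
          ext x; simp; tauto
        rw [this]; exact hmem
    · intro h e he
      simp only [K4edge, Finset.mem_singleton] at he
      subst he
      rw [himg]
      have := (h (u := 0) (v := 1) (by simp))
      rw [hadj] at this
      simpa [he0, he1, he2, he3] using this
  apply Finset.card_nbij' (fun f => fun i j => f (e24 (i, j)))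
    (fun g => fun k => g (e24.symm k).1 (e24.symm k).2)
  · intro f hf
    simp only [Finset.mem_coe, Finset.mem_filter, Finset.mem_univ, true_and] at hf ⊢
    exact (key f).mp hf
  · intro g hg
    simp only [Finset.mem_coe, Finset.mem_filter, Finset.mem_univ, true_and] at hg ⊢
    rw [key]
    intro u v huv
    convert hg huv using 2 <;> simp only [Equiv.symm_apply_apply]
  · intro f _
    funext k
    simp
  · intro g _
    funext i j
    simp

lemma hdensity1 {V W : Type} [Fintype V] [Fintype W] (G : SimpleGraph V)
    (H : Finset (Finset W)) (hH : ∀ e ∈ H, e.card = 4) :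
    hHomDensity (evenHypergraph G) H = homDensity G (auxGraph H) := by
  unfold hHomDensity homDensity
  have h1 : (Fintype.card W : ℝ) ^ Fintype.card (V × Fin 2)
      = (Fintype.card (Fin 2 → W) : ℝ) ^ Fintype.card V := by
    rw [Fintype.card_prod, Fintype.card_fun]
    push_cast
    rw [pow_mul]
    ring
  rw [h1]
  congr 1
  exact congrArg (Nat.cast : ℕ → ℝ) (count1 G H hH _ _ _ _)

lemma hdensity2 {W : Type} [Fintype W] (H : Finset (Finset W))
    (hH : ∀ e ∈ H, e.card = 4) :
    hHomDensity K4edge H = homDensity (⊤ : SimpleGraph (Fin 2)) (auxGraph H) := by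
  unfold hHomDensity homDensity
  have h1 : (Fintype.card W : ℝ) ^ Fintype.card (Fin 4)
      = (Fintype.card (Fin 2 → W) : ℝ) ^ Fintype.card (Fin 2) := by
    rw [Fintype.card_fun]
    push_cast
    rw [← pow_mul]
    norm_num
  rw [h1]
  congr 1
  exact congrArg (Nat.cast : ℕ → ℝ) (count2 H hH _ _ _ _)

/-- If `G` is a Sidorenko graph, then the even 4-uniform hypergraph obtained from it is
Sidorenko: `t(G̃, H) ≥ t(K₄⁽⁴⁾, H)^{e(G)}` for every 4-uniform hypergraph `H`. -/
theorem evenHypergraph_sidorenko {V : Type} [Fintype V] (G : SimpleGraph V)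
    (hG : ∀ (W : Type) [Fintype W] (H : SimpleGraph W),
      homDensity G H ≥ homDensity (⊤ : SimpleGraph (Fin 2)) H ^ G.edgeFinset.card) :
    ∀ (W : Type) [Fintype W] (H : Finset (Finset W)), (∀ e ∈ H, e.card = 4) →
      hHomDensity (evenHypergraph G) H ≥ hHomDensity K4edge H ^ G.edgeFinset.card := by
  intro W _ H hH
  rw [hdensity1 G H hH, hdensity2 H hH]
  exact hG (Fin 2 → W) (auxGraph H)
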